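/- Let (S,*,n) be an Okubo algebra over a field k with a grading S = ⊕_{g∈G} S_g by a group G such that the identity component S_1 is zero. Then every element of the support has order 3 in G, every nonzero homogeneous component is one-dimensional, the support consists of exactly 8 elements, and the support together with the identity forms a subgroup of G isomorphic to Z/3 × Z/3. Moreover, there exist elements g, h in the support generating this subgroup and elements x, y with S_g = kx, S_h = ky, n(x) = 0, n(x, x*x) ≠ 0, n(y) = 0, n(y, y*y) ≠ 0, n(a, b) = 0 for all a ∈ {x, x*x}, b ∈ {y, y*y}, and x*y = 0. -/

import Mathlib

open QuadraticMap

section OkuboAux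

variable {k : Type*} [Field k] {S : Type*} [AddCommGroup S] [Module k S]
variable (mul : S →ₗ[k] S →ₗ[k] S) (n : QuadraticForm k S)

private lemma okg_polar_mul_mul_left
    (hcomp : ∀ x y : S, n (mul x y) = n x * n y) (x y z : S) :
    polar n (mul x y) (mul x z) = n x * polar n y z := by
  have h : mul x y + mul x z = mul x (y + z) := (map_add (mul x) y z).symm
  simp only [polar, h, hcomp]
  ring

private lemma okg_polar_mul_mul_right
    (hcomp : ∀ x y : S, n (mul x y) = n x * n y) (x y z : S) :
    polar n (mul x z) (mul y z) = polar n x y * n z := by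
  have h : mul x z + mul y z = mul (x + y) z := by
    rw [map_add mul x y]; rfl
  simp only [polar, h, hcomp]
  ring

private lemma okg_law1
    (hnondeg : ∀ x : S, (∀ y : S, polar n x y = 0) → x = 0)
    (hcomp : ∀ x y : S, n (mul x y) = n x * n y)
    (hassoc : ∀ x y z : S, polar n (mul x y) z = polar n x (mul y z))
    (x y : S) : mul (mul x y) x = n x • y := by
  have key : ∀ z : S, polar n (mul (mul x y) x - n x • y) z = 0 := by
    intro z
    rw [polar_sub_left, hassoc, okg_polar_mul_mul_left mul n hcomp,
      polar_smul_left, smul_eq_mul, sub_self]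
  exact sub_eq_zero.mp (hnondeg _ key)

private lemma okg_law2
    (hnondeg : ∀ x : S, (∀ y : S, polar n x y = 0) → x = 0)
    (hcomp : ∀ x y : S, n (mul x y) = n x * n y)
    (hassoc : ∀ x y z : S, polar n (mul x y) z = polar n x (mul y z))
    (x y : S) : mul x (mul y x) = n x • y := by
  have key : ∀ z : S, polar n (mul x (mul y x) - n x • y) z = 0 := by
    intro z
    rw [polar_sub_left, polar_smul_left, smul_eq_mul]
    have h1 : polar n (mul x (mul y x)) z = polar n (mul z x) (mul y x) := by
      rw [polar_comm, hassoc]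
    rw [h1, okg_polar_mul_mul_right mul n hcomp, polar_comm _ z y]
    ring
  exact sub_eq_zero.mp (hnondeg _ key)

private lemma okg_L1
    (hnondeg : ∀ x : S, (∀ y : S, polar n x y = 0) → x = 0)
    (hcomp : ∀ x y : S, n (mul x y) = n x * n y)
    (hassoc : ∀ x y z : S, polar n (mul x y) z = polar n x (mul y z))
    (a b c : S) :
    mul (mul a b) c + mul (mul c b) a = polar n a c • b := by
  have h := okg_law1 mul n hnondeg hcomp hassoc (a + c) b
  have hexp : mul (mul (a + c) b) (a + c)
      = mul (mul a b) a + (mul (mul a b) c + mul (mul c b) a) + mul (mul c b) c := by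
    rw [map_add mul a c, LinearMap.add_apply, map_add, map_add]
    simp only [LinearMap.add_apply]
    abel
  rw [hexp, okg_law1 mul n hnondeg hcomp hassoc a b,
    okg_law1 mul n hnondeg hcomp hassoc c b] at h
  have hn : n (a + c) = polar n a c + n a + n c := by simp [polar]; abel
  have h2 : mul (mul a b) c + mul (mul c b) a = n (a + c) • b - n a • b - n c • b := by
    rw [← h]; abel
  rw [h2, hn, add_smul, add_smul]; abel

private lemma okg_L2
    (hnondeg : ∀ x : S, (∀ y : S, polar n x y = 0) → x = 0)
    (hcomp : ∀ x y : S, n (mul x y) = n x * n y)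
    (hassoc : ∀ x y z : S, polar n (mul x y) z = polar n x (mul y z))
    (a b c : S) :
    mul a (mul b c) + mul c (mul b a) = polar n a c • b := by
  have h := okg_law2 mul n hnondeg hcomp hassoc (a + c) b
  have hexp : mul (a + c) (mul b (a + c))
      = mul a (mul b a) + (mul a (mul b c) + mul c (mul b a)) + mul c (mul b c) := by
    rw [map_add (mul b) a c, map_add mul a c, LinearMap.add_apply, map_add, map_add]
    abel
  rw [hexp, okg_law2 mul n hnondeg hcomp hassoc a b,
    okg_law2 mul n hnondeg hcomp hassoc c b] at h
  have hn : n (a + c) = polar n a c + n a + n c := by simp [polar]; abel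
  have h2 : mul a (mul b c) + mul c (mul b a) = n (a + c) • b - n a • b - n c • b := by
    rw [← h]; abel
  rw [h2, hn, add_smul, add_smul]; abel

end OkuboAux


/-- a group grading of an Okubo algebra with trivial identity
component has all support elements of order 3, one-dimensional homogeneous
components, support of cardinality 8, and support ∪ {1} a subgroup isomorphic
to ℤ₃ × ℤ₃, generated by two support elements `g, h` whose components are
spanned by a standard pair `(x, y)`. -/
theorem okubo_grading_trivial_identity_component
    {k : Type*} [Field k] {S : Type*} [AddCommGroup S] [Module k S]
    (mul : S →ₗ[k] S →ₗ[k] S) (n : QuadraticForm k S)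
    (hnondeg : ∀ x : S, (∀ y : S, polar n x y = 0) → x = 0)
    (hcomp : ∀ x y : S, n (mul x y) = n x * n y)
    (hassoc : ∀ x y z : S, polar n (mul x y) z = polar n x (mul y z))
    (hdim : Module.finrank k S = 8)
    (hnopara : ¬ ∃ e : S, ∀ x : S,
      mul e x = polar n e x • e - x ∧ mul x e = polar n e x • e - x)
    {G : Type*} [Group G] [DecidableEq G]
    (A : G → Submodule k S)
    (hdecomp : DirectSum.IsInternal A)
    (hgrmul : ∀ g h : G, ∀ x ∈ A g, ∀ y ∈ A h, mul x y ∈ A (g * h))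
    (h1 : A 1 = ⊥) :
    (∀ g : G, A g ≠ ⊥ → orderOf g = 3) ∧
    (∀ g : G, A g ≠ ⊥ → Module.finrank k (A g) = 1) ∧
    Set.ncard {g : G | A g ≠ ⊥} = 8 ∧
    ∃ H : Subgroup G,
      (H : Set G) = {g : G | A g ≠ ⊥} ∪ {1} ∧
      Nonempty (H ≃* Multiplicative (ZMod 3 × ZMod 3)) ∧
      ∃ g h : G, A g ≠ ⊥ ∧ A h ≠ ⊥ ∧ Subgroup.closure {g, h} = H ∧
        ∃ x y : S,
          A g = Submodule.span k {x} ∧ A h = Submodule.span k {y} ∧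
          n x = 0 ∧ polar n x (mul x x) ≠ 0 ∧
          n y = 0 ∧ polar n y (mul y y) ≠ 0 ∧
          (∀ a ∈ ({x, mul x x} : Set S), ∀ b ∈ ({y, mul y y} : Set S),
            polar n a b = 0) ∧
          mul x y = 0 := by
  have law1 := okg_law1 mul n hnondeg hcomp hassoc
  have law2 := okg_law2 mul n hnondeg hcomp hassoc
  have L1 := okg_L1 mul n hnondeg hcomp hassoc
  have L2 := okg_L2 mul n hnondeg hcomp hassoc
  haveI hFD : FiniteDimensional k S :=
    FiniteDimensional.of_finrank_pos (by rw [hdim]; norm_num)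
  have hind : iSupIndep A := hdecomp.submodule_iSupIndep
  have htop : iSup A = ⊤ := hdecomp.submodule_iSup_eq_top
  -- pairwise disjointness
  have hdisj : ∀ {g h : G}, g ≠ h → ∀ {x : S}, x ∈ A g → x ∈ A h → x = 0 := by
    intro g h hne x hxg hxh
    have hsub : A h ≤ ⨆ (j) (_ : j ≠ g), A j := by
      exact le_iSup₂ (f := fun (j : G) (_ : j ≠ g) => A j) h (Ne.symm hne)
    have hd := (iSupIndep_def.mp hind g)
    have : x ∈ A g ⊓ ⨆ (j) (_ : j ≠ g), A j := ⟨hxg, hsub hxh⟩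
    rw [disjoint_iff] at hd
    rw [hd] at this
    exact this
  have htri : ∀ {a b c : G}, c ≠ a → c ≠ b →
      ∀ {x p q : S}, x ∈ A c → p ∈ A a → q ∈ A b → x = p + q → x = 0 := by
    intro a b c hca hcb x p q hx hp hq he
    have hsub : A a ⊔ A b ≤ ⨆ (j) (_ : j ≠ c), A j :=
      sup_le (le_iSup₂ (f := fun (j : G) (_ : j ≠ c) => A j) a (Ne.symm hca))
        (le_iSup₂ (f := fun (j : G) (_ : j ≠ c) => A j) b (Ne.symm hcb))
    have hd := (iSupIndep_def.mp hind c)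
    rw [disjoint_iff] at hd
    have : x ∈ A c ⊓ ⨆ (j) (_ : j ≠ c), A j := by
      refine ⟨hx, hsub ?_⟩
      rw [he]
      exact Submodule.add_mem_sup hp hq
    rw [hd] at this
    exact this
  -- norm vanishes on homogeneous elements
  have hF1 : ∀ (g : G) (x : S), x ∈ A g → n x = 0 := by
    intro g x hx
    by_contra hnx
    have hx0 : x ≠ 0 := by rintro rfl; simp at hnx
    have hxx : mul x x ∈ A (g * g) := hgrmul g g x hx x hx
    have h3 : mul (mul x x) x ∈ A (g * g * g) := hgrmul _ g _ hxx x hx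
    rw [law1 x x] at h3
    have hsm : n x • x ≠ 0 := smul_ne_zero hnx hx0
    by_cases hgg : g * g = 1
    · rw [hgg, h1] at hxx
      have hz : mul x x = 0 := by simpa using hxx
      apply hsm
      rw [← law1 x x, hz, map_zero, LinearMap.zero_apply]
    · have hne : g * g * g ≠ g := by
        intro hcon
        exact hgg (mul_right_cancel (b := g) (by rw [hcon, one_mul]))
      exact hsm (hdisj hne h3 (Submodule.smul_mem _ _ hx))
  -- polar vanishes on a single homogeneous component
  have hpol0 : ∀ (g : G) (x y : S), x ∈ A g → y ∈ A g → polar n x y = 0 := by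
    intro g x y hx hy
    simp only [polar, hF1 g _ (add_mem hx hy), hF1 g _ hx, hF1 g _ hy, sub_zero, sub_self]
  -- polar vanishes between components with g * h ≠ 1
  have hF2 : ∀ (g h : G), g * h ≠ 1 → ∀ (x y : S), x ∈ A g → y ∈ A h →
      polar n x y = 0 := by
    intro g h hgh x y hx hy
    by_contra hp
    have hx0 : x ≠ 0 := by
      rintro rfl
      exact hp (polar_zero_left n y)
    have key := L1 x x y
    have m1 : mul (mul x x) y ∈ A (g * g * h) := hgrmul _ _ _ (hgrmul _ _ _ hx _ hx) _ hy
    have m2 : mul (mul y x) x ∈ A (h * g * g) := hgrmul _ _ _ (hgrmul _ _ _ hy _ hx) _ hx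
    have hc1 : g ≠ g * g * h := by
      intro e
      apply hgh
      have : g * 1 = g * (g * h) := by rw [mul_one, ← mul_assoc, ← e]
      exact (mul_left_cancel this).symm
    have hc2 : g ≠ h * g * g := by
      intro e
      apply hgh
      have e' : h * (g * g) = g := by rw [← mul_assoc]; exact e.symm
      have hh : h = g * (g * g)⁻¹ := eq_mul_inv_of_mul_eq e'
      rw [hh]; group
    have hz : polar n x y • x = 0 :=
      htri hc1 hc2 (Submodule.smul_mem _ _ hx) m1 m2 key.symm
    rcases smul_eq_zero.mp hz with h' | h'
    · exact hp h'
    · exact hx0 h'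
  -- nondegenerate pairing with the inverse component
  have hFpair : ∀ (g : G) (x : S), x ∈ A g → x ≠ 0 →
      ∃ y, y ∈ A g⁻¹ ∧ polar n x y ≠ 0 := by
    intro g x hx hx0
    by_contra hno
    push_neg at hno
    apply hx0
    apply hnondeg
    intro z
    have hz : z ∈ ⨆ i, A i := by rw [htop]; exact Submodule.mem_top
    refine Submodule.iSup_induction (motive := fun z => polar n x z = 0) A hz ?_ ?_ ?_
    · intro i w hw
      by_cases hgi : g * i = 1
      · have hig : i = g⁻¹ := eq_inv_of_mul_eq_one_right hgi
        exact hno w (hig ▸ hw)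
      · exact hF2 g i hgi x w hx hw
    · simpa using polar_zero_right n x
    · intro u v hu hv
      rw [polar_add_right, hu, hv, add_zero]
  -- no element of the support has order 2 (or 1)
  have hg2 : ∀ (g : G) (x : S), x ∈ A g → x ≠ 0 → g * g ≠ 1 := by
    intro g x hx hx0 hgg
    obtain ⟨y, hy, hp⟩ := hFpair g x hx hx0
    have hinv : g⁻¹ = g := by
      rw [inv_eq_iff_mul_eq_one]; exact hgg
    rw [hinv] at hy
    exact hp (hpol0 g x y hx hy)
  -- cube relations: for nonzero homogeneous x, x*x ≠ 0, polar x (x*x) ≠ 0, g³ = 1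
  have hF5 : ∀ (g : G) (x : S), x ∈ A g → x ≠ 0 →
      mul x x ≠ 0 ∧ polar n x (mul x x) ≠ 0 ∧ g * g * g = 1 := by
    intro g x hx hx0
    obtain ⟨y, hy, hpxy⟩ := hFpair g x hx hx0
    have hyx : mul y x = 0 := by
      have := hgrmul g⁻¹ g y hy x hx
      rw [inv_mul_cancel, h1] at this
      simpa using this
    have key1 := L1 x x y
    rw [hyx, map_zero, LinearMap.zero_apply, add_zero] at key1
    -- key1 : mul (mul x x) y = polar n x y • x
    have hu0 : mul x x ≠ 0 := by
      intro e
      rw [e, map_zero, LinearMap.zero_apply] at key1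
      exact smul_ne_zero hpxy hx0 key1.symm
    have hu : mul x x ∈ A (g * g) := hgrmul g g x hx x hx
    obtain ⟨w, hw, hpuw⟩ := hFpair (g * g) (mul x x) hu hu0
    have hwu : mul w (mul x x) = 0 := by
      have := hgrmul (g * g)⁻¹ (g * g) w hw (mul x x) hu
      rw [inv_mul_cancel, h1] at this
      simpa using this
    have key2 := L1 (mul x x) (mul x x) w
    rw [hwu, map_zero, LinearMap.zero_apply, add_zero] at key2
    have huu0 : mul (mul x x) (mul x x) ≠ 0 := by
      intro e
      rw [e, map_zero, LinearMap.zero_apply] at key2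
      exact smul_ne_zero hpuw hu0 key2.symm
    have hux : mul (mul x x) x = 0 := by
      rw [law1 x x, hF1 g x hx, zero_smul]
    have key3 := L1 x x (mul x x)
    rw [hux, map_zero, LinearMap.zero_apply, add_zero] at key3
    -- key3 : mul (mul x x) (mul x x) = polar n x (mul x x) • x
    have hN : polar n x (mul x x) ≠ 0 := by
      intro e
      rw [e, zero_smul] at key3
      exact huu0 key3
    refine ⟨hu0, hN, ?_⟩
    have m4 : mul (mul x x) (mul x x) ∈ A (g * g * (g * g)) := hgrmul _ _ _ hu _ hu
    have hin : polar n x (mul x x) • x ∈ A g := Submodule.smul_mem _ _ hx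
    rw [key3] at m4
    by_contra hcu
    have hne : g * g * (g * g) ≠ g := by
      intro e
      apply hcu
      have h4 : g * g * g * g = g := (mul_assoc (g * g) g g).trans e
      exact mul_right_cancel (b := g) (by rw [one_mul]; exact h4)
    exact huu0 (by rw [key3]; exact hdisj hne m4 hin)
  -- every nonzero homogeneous component is one-dimensional
  have hFD1 : ∀ (g : G), A g ≠ ⊥ → Module.finrank k (A g) = 1 := by
    intro g hAg
    obtain ⟨x, hx, hx0⟩ := Submodule.exists_mem_ne_zero_of_ne_bot hAg
    obtain ⟨-, hN, hcube⟩ := hF5 g x hx hx0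
    have hsple : Submodule.span k {x} ≤ A g := by
      rw [Submodule.span_le, Set.singleton_subset_iff]; exact hx
    have h1le : 1 ≤ Module.finrank k (A g) := by
      have := Submodule.finrank_mono (s := Submodule.span k {x}) (t := A g) hsple
      rwa [finrank_span_singleton hx0] at this
    by_contra hne1
    -- pick b' ∈ A g not in span {x}
    obtain ⟨b', hb', hb'sp⟩ : ∃ b', b' ∈ A g ∧ b' ∉ Submodule.span k {x} := by
      by_contra hall
      push_neg at hall
      have : A g ≤ Submodule.span k {x} := fun z hz => hall z hz
      have h2 := Submodule.finrank_mono (s := A g) (t := Submodule.span k {x}) this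
      rw [finrank_span_singleton hx0] at h2
      omega
    -- the two evaluations of (x*b')*(x*x)
    have hI1 : mul (mul x b') (mul x x) = polar n x (mul x x) • b' := by
      have key := L1 x b' (mul x x)
      have hz : mul (mul x x) b' = 0 := by
        have hm := hgrmul (g * g) g (mul x x) (hgrmul g g x hx x hx) b' hb'
        rw [hcube, h1] at hm
        simpa using hm
      rw [hz, map_zero, LinearMap.zero_apply, add_zero] at key
      exact key
    have hI3 : mul (mul x b') (mul x x) = polar n (mul x b') x • x := by
      have key := L2 (mul x b') x x
      have hz : mul x (mul x b') = 0 := by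
        have hm := hgrmul g (g * g) x hx (mul x b') (hgrmul g g x hx b' hb')
        rw [show g * (g * g) = 1 from by rw [← mul_assoc]; exact hcube, h1] at hm
        simpa using hm
      rw [hz, map_zero, add_zero] at key
      exact key
    apply hb'sp
    have : b' = (polar n x (mul x x))⁻¹ • (polar n (mul x b') x • x) := by
      rw [← hI3, hI1, inv_smul_smul₀ hN]
    rw [this]
    exact Submodule.smul_mem _ _ (Submodule.smul_mem _ _ (Submodule.mem_span_singleton_self x))
  -- spanning description of 1-dim components
  have hspan : ∀ (g : G) (x : S), x ∈ A g → x ≠ 0 → A g = Submodule.span k {x} := by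
    intro g x hx hx0
    have hAg : A g ≠ ⊥ := (Submodule.ne_bot_iff _).mpr ⟨x, hx, hx0⟩
    have hle : Submodule.span k {x} ≤ A g := by
      rw [Submodule.span_le, Set.singleton_subset_iff]; exact hx
    exact (Submodule.eq_of_le_of_finrank_le hle
      (by rw [finrank_span_singleton hx0, hFD1 g hAg])).symm
  -- finiteness of the support and cardinality 8
  haveI hSfin : Fintype {g : G // A g ≠ ⊥} := hind.fintypeNeBotOfFiniteDimensional
  have hvex : ∀ s : {g : G // A g ≠ ⊥}, ∃ x : S, x ∈ A s.1 ∧ x ≠ 0 := fun s =>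
    Submodule.exists_mem_ne_zero_of_ne_bot s.2
  choose v hv hv0 using hvex
  have hli : LinearIndependent k v :=
    iSupIndep.linearIndependent _ (hind.comp Subtype.val_injective) hv hv0
  have hsp : ⊤ ≤ Submodule.span k (Set.range v) := by
    rw [← htop]
    refine iSup_le ?_
    intro g
    by_cases hAg : A g = ⊥
    · rw [hAg]; exact bot_le
    · rw [hspan g (v ⟨g, hAg⟩) (hv ⟨g, hAg⟩) (hv0 ⟨g, hAg⟩)]
      exact Submodule.span_mono (Set.singleton_subset_iff.mpr (Set.mem_range_self _))
  have hcard8 : Fintype.card {g : G // A g ≠ ⊥} = 8 := by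
    have hb := Module.finrank_eq_card_basis (Module.Basis.mk hli hsp)
    rw [hdim] at hb
    exact hb.symm
  haveI hSfin' : Fintype ↥{g : G | A g ≠ ⊥} := hSfin
  have hncard : ({g : G | A g ≠ ⊥}).ncard = 8 := by
    rw [← Nat.card_coe_set_eq, Nat.card_eq_fintype_card]
    rw [show hSfin' = hSfin from Subsingleton.elim _ _]
    exact hcard8
  have hfinsupp : ({g : G | A g ≠ ⊥}).Finite := Set.toFinite _
  -- closure of the support under multiplication
  have hclo : ∀ (g h' : G), A g ≠ ⊥ → A h' ≠ ⊥ → g * h' ≠ 1 → A (g * h') ≠ ⊥ := by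
    intro g h' hAg hAh hgh
    obtain ⟨x, hx, hx0⟩ := Submodule.exists_mem_ne_zero_of_ne_bot hAg
    obtain ⟨w, hw, hw0⟩ := Submodule.exists_mem_ne_zero_of_ne_bot hAh
    by_cases hxv : mul x w = 0
    · obtain ⟨-, hN, hcube⟩ := hF5 g x hx hx0
      have hy : mul x x ∈ A (g * g) := hgrmul g g x hx x hx
      have key := L1 x w (mul x x)
      rw [hxv, map_zero, LinearMap.zero_apply, zero_add] at key
      -- key : mul (mul (x*x) w) x = polar n x (x*x) • w
      have hu0 : mul (mul x x) w ≠ 0 := by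
        intro e
        rw [e, map_zero, LinearMap.zero_apply] at key
        exact smul_ne_zero hN hw0 key.symm
      have hyx : mul (mul x x) x = 0 := by rw [law1, hF1 g x hx, zero_smul]
      have hxu : mul x (mul (mul x x) w) = 0 := by
        have key2 := L2 x (mul x x) w
        rw [hyx, map_zero, add_zero, hF2 g h' hgh x w hx hw, zero_smul] at key2
        exact key2
      have key3 := L1 x (mul (mul x x) w) (mul x x)
      rw [hxu, map_zero, LinearMap.zero_apply, zero_add] at key3
      -- key3 : mul (mul (x*x) (mul (x*x) w)) x = N • (mul (x*x) w)
      have hyu0 : mul (mul x x) (mul (mul x x) w) ≠ 0 := by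
        intro e
        rw [e, map_zero, LinearMap.zero_apply] at key3
        exact smul_ne_zero hN hu0 key3.symm
      have hmem : mul (mul x x) (mul (mul x x) w) ∈ A (g * g * (g * g * h')) :=
        hgrmul _ _ _ hy _ (hgrmul _ _ _ hy _ hw)
      have hidx : g * g * (g * g * h') = g * h' := by
        have : g * g * (g * g * h') = (g * g * g) * (g * h') := by group
        rw [this, hcube, one_mul]
      rw [hidx] at hmem
      exact (Submodule.ne_bot_iff _).mpr ⟨_, hmem, hyu0⟩
    · exact (Submodule.ne_bot_iff _).mpr ⟨_, hgrmul g h' x hx w hw, hxv⟩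
  -- existence of a "null partner"
  have hnull : ∀ (g : G) (x : S), x ∈ A g → x ≠ 0 →
      ∃ h', A h' ≠ ⊥ ∧ h' ≠ g ∧ h' ≠ g * g ∧ ∀ w ∈ A h', mul x w = 0 := by
    intro g x hx hx0
    obtain ⟨-, hN, hcube⟩ := hF5 g x hx hx0
    have hginv : g⁻¹ = g * g := by
      rw [inv_eq_iff_mul_eq_one, ← mul_assoc]; exact hcube
    by_contra hass
    push_neg at hass
    have hQ : ∀ h', h' ≠ g → ∀ w ∈ A h', mul w x = 0 := by
      intro h' hne w hw
      by_contra ht0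
      have hw0 : w ≠ 0 := by
        intro e
        rw [e, map_zero, LinearMap.zero_apply] at ht0
        exact ht0 rfl
      have htA : mul w x ∈ A (h' * g) := hgrmul _ _ _ hw _ hx
      have hxt : mul x (mul w x) = 0 := by rw [law2 x w, hF1 g x hx, zero_smul]
      have hAh'g : A (h' * g) ≠ ⊥ := (Submodule.ne_bot_iff _).mpr ⟨_, htA, ht0⟩
      have hne1 : h' * g ≠ g := by
        intro e
        have h'1 : h' = 1 := mul_right_cancel (b := g) (by rw [e, one_mul])
        rw [h'1, h1] at hw
        exact hw0 (by simpa using hw)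
      have hne2 : h' * g ≠ g * g := fun e => hne (mul_right_cancel e)
      obtain ⟨w', hw', hxw'⟩ := hass (h' * g) hAh'g hne1 hne2
      rw [hspan (h' * g) (mul w x) htA ht0, Submodule.mem_span_singleton] at hw'
      obtain ⟨c, rfl⟩ := hw'
      exact hxw' (by rw [LinearMap.map_smul, hxt, smul_zero])
    obtain ⟨h₀, hh₀A, hh₀g, hh₀gg⟩ :
        ∃ h₀, A h₀ ≠ ⊥ ∧ h₀ ≠ g ∧ h₀ ≠ g * g := by
      by_contra hall
      push_neg at hall
      have hsub : {g' : G | A g' ≠ ⊥} ⊆ {g, g * g} := by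
        intro a ha
        rcases eq_or_ne a g with h | h
        · exact Or.inl h
        · exact Or.inr (hall a ha h)
      have hle := Set.ncard_le_ncard hsub (Set.toFinite _)
      rw [hncard] at hle
      have h2 : ({g, g * g} : Set G).ncard ≤ 2 := by
        refine le_trans (Set.ncard_insert_le _ _) ?_
        simp [Set.ncard_singleton]
      omega
    obtain ⟨w₀, hw₀, hxw₀⟩ := hass h₀ hh₀A hh₀g hh₀gg
    have hc : mul x w₀ ∈ A (g * h₀) := hgrmul _ _ _ hx _ hw₀
    have hgh₀ : g * h₀ ≠ 1 := by
      intro e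
      exact hh₀gg ((eq_inv_of_mul_eq_one_right e).trans hginv)
    obtain ⟨w, hw, hpw⟩ := hFpair (g * h₀) (mul x w₀) hc hxw₀
    have hchain : polar n w₀ (mul w x) ≠ 0 := by
      intro e
      apply hpw
      rw [hassoc x w₀ w, polar_comm, hassoc w₀ w x]
      exact e
    have hwx0 : mul w x ≠ 0 := by
      intro e
      exact hchain (by rw [e]; exact polar_zero_right n _)
    have hinvg : (g * h₀)⁻¹ = g := by
      by_contra hne
      exact hwx0 (hQ _ hne w hw)
    have heq : g * h₀ = g * g := by
      calc g * h₀ = ((g * h₀)⁻¹)⁻¹ := (inv_inv _).symm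
        _ = g⁻¹ := by rw [hinvg]
        _ = g * g := hginv
    exact hh₀g (mul_left_cancel heq)
  -- generic facts
  have hgne1 : ∀ g : G, A g ≠ ⊥ → g ≠ 1 := by
    intro g hg e; rw [e] at hg; exact hg h1
  have hord : ∀ g : G, A g ≠ ⊥ → orderOf g = 3 := by
    intro g hg
    obtain ⟨x, hx, hx0⟩ := Submodule.exists_mem_ne_zero_of_ne_bot hg
    obtain ⟨-, -, hc⟩ := hF5 g x hx hx0
    haveI : Fact (Nat.Prime 3) := ⟨by norm_num⟩
    exact orderOf_eq_prime (by rw [pow_succ, pow_two]; exact hc) (hgne1 g hg)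
  have hsqb : ∀ g : G, A g ≠ ⊥ → A (g * g) ≠ ⊥ := by
    intro g hg
    obtain ⟨x, hx, hx0⟩ := Submodule.exists_mem_ne_zero_of_ne_bot hg
    obtain ⟨hxx, -, -⟩ := hF5 g x hx hx0
    exact (Submodule.ne_bot_iff _).mpr ⟨mul x x, hgrmul g g x hx x hx, hxx⟩
  have hinv_eq : ∀ g : G, A g ≠ ⊥ → g⁻¹ = g * g := by
    intro g hg
    obtain ⟨x, hx, hx0⟩ := Submodule.exists_mem_ne_zero_of_ne_bot hg
    obtain ⟨-, -, hc⟩ := hF5 g x hx hx0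
    rw [inv_eq_iff_mul_eq_one, ← mul_assoc]; exact hc
  have hsquare : ∀ a : G, a * a * a = 1 → (a * a) * (a * a) = a := by
    intro a ha
    rw [show (a * a) * (a * a) = (a * a * a) * a from by group, ha, one_mul]
  -- choose the generators
  have hne0 : ({g : G | A g ≠ ⊥}).Nonempty :=
    (Set.ncard_pos hfinsupp).mp (by rw [hncard]; norm_num)
  obtain ⟨g₀, hg₀⟩ := hne0
  obtain ⟨x₀, hx₀, hx₀0⟩ := Submodule.exists_mem_ne_zero_of_ne_bot hg₀
  obtain ⟨hxx0, hNx, hcubeg⟩ := hF5 g₀ x₀ hx₀ hx₀0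
  obtain ⟨h₀, hh₀A, hh₀g, hh₀gg, hxnull⟩ := hnull g₀ x₀ hx₀ hx₀0
  obtain ⟨y₀, hy₀, hy₀0⟩ := Submodule.exists_mem_ne_zero_of_ne_bot hh₀A
  obtain ⟨hyy0, hNy, hcubeh⟩ := hF5 h₀ y₀ hy₀ hy₀0
  have hxy0 : mul x₀ y₀ = 0 := hxnull y₀ hy₀
  have hinvg : g₀⁻¹ = g₀ * g₀ := hinv_eq g₀ hg₀
  have hinvgg : (g₀ * g₀)⁻¹ = g₀ := inv_eq_of_mul_eq_one_right hcubeg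
  -- the four nonidentity products
  have e1 : g₀ * h₀ ≠ 1 := by
    intro e
    exact hh₀gg ((eq_inv_of_mul_eq_one_right e).trans hinvg)
  have e2 : g₀ * (h₀ * h₀) ≠ 1 := by
    intro e
    have e' : h₀ * h₀ = g₀ * g₀ := (eq_inv_of_mul_eq_one_right e).trans hinvg
    have hs := hsquare h₀ hcubeh
    rw [e', hsquare g₀ hcubeg] at hs
    exact hh₀g hs.symm
  have e3 : (g₀ * g₀) * h₀ ≠ 1 := by
    intro e
    exact hh₀g ((eq_inv_of_mul_eq_one_right e).trans hinvgg)
  have e4 : (g₀ * g₀) * (h₀ * h₀) ≠ 1 := by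
    intro e
    have e' : h₀ * h₀ = g₀ := (eq_inv_of_mul_eq_one_right e).trans hinvgg
    have hs := hsquare h₀ hcubeh
    rw [e'] at hs
    exact hh₀gg hs.symm
  -- commutativity of the chosen pair
  have hY : mul x₀ x₀ ∈ A (g₀ * g₀) := hgrmul _ _ _ hx₀ _ hx₀
  have hcomm : g₀ * h₀ = h₀ * g₀ := by
    have key := L1 x₀ y₀ (mul x₀ x₀)
    rw [hxy0, map_zero, LinearMap.zero_apply, zero_add] at key
    have hmem : mul (mul (mul x₀ x₀) y₀) x₀ ∈ A (g₀ * g₀ * h₀ * g₀) :=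
      hgrmul _ _ _ (hgrmul _ _ _ hY _ hy₀) _ hx₀
    have hsmem : polar n x₀ (mul x₀ x₀) • y₀ ∈ A h₀ := Submodule.smul_mem _ _ hy₀
    have hnz : polar n x₀ (mul x₀ x₀) • y₀ ≠ 0 := smul_ne_zero hNx hy₀0
    have hidx : g₀ * g₀ * h₀ * g₀ = h₀ := by
      by_contra hne2
      exact hnz (hdisj hne2 (key ▸ hmem) hsmem)
    apply mul_left_cancel (a := g₀ * g₀)
    calc g₀ * g₀ * (g₀ * h₀) = (g₀ * g₀ * g₀) * h₀ := by group
      _ = h₀ := by rw [hcubeg, one_mul]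
      _ = g₀ * g₀ * h₀ * g₀ := hidx.symm
      _ = g₀ * g₀ * (h₀ * g₀) := by group
  -- the subgroup
  refine ⟨hord, hFD1, hncard, ?_⟩
  let H : Subgroup G :=
    { carrier := {g : G | A g ≠ ⊥} ∪ {1}
      one_mem' := Or.inr rfl
      mul_mem' := by
        rintro a b (ha | ha) (hb | hb)
        · by_cases hab : a * b = 1
          · exact Or.inr hab
          · exact Or.inl (hclo a b ha hb hab)
        · rw [Set.mem_singleton_iff] at hb
          rw [hb, mul_one]
          exact Or.inl ha
        · rw [Set.mem_singleton_iff] at ha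
          rw [ha, one_mul]
          exact Or.inl hb
        · rw [Set.mem_singleton_iff] at ha hb
          rw [ha, hb, mul_one]
          exact Or.inr rfl
      inv_mem' := by
        rintro a (ha | ha)
        · rw [hinv_eq a ha]
          exact Or.inl (hsqb a ha)
        · rw [Set.mem_singleton_iff] at ha
          rw [ha, inv_one]
          exact Or.inr rfl }
  have hg₀H : g₀ ∈ H := Or.inl hg₀
  have hh₀H : h₀ ∈ H := Or.inl hh₀A
  haveI hHfin : Finite H :=
    (Set.Finite.union hfinsupp (Set.finite_singleton 1)).to_subtype
  have hcardH : Nat.card H = 9 := by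
    have h9 : ({g : G | A g ≠ ⊥} ∪ {1} : Set G).ncard = 9 := by
      rw [Set.union_singleton,
        Set.ncard_insert_of_notMem (by simp [h1]) hfinsupp, hncard]
    calc Nat.card H = Nat.card ↥({g : G | A g ≠ ⊥} ∪ {1} : Set G) := rfl
      _ = 9 := by rw [Nat.card_coe_set_eq, h9]
  -- the explicit isomorphism
  let g' : H := ⟨g₀, hg₀H⟩
  let h' : H := ⟨h₀, hh₀H⟩
  have hg'3 : g' ^ 3 = 1 := by
    apply Subtype.ext
    simp only [SubmonoidClass.coe_pow, OneMemClass.coe_one]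
    rw [pow_succ, pow_two]; exact hcubeg
  have hh'3 : h' ^ 3 = 1 := by
    apply Subtype.ext
    simp only [SubmonoidClass.coe_pow, OneMemClass.coe_one]
    rw [pow_succ, pow_two]; exact hcubeh
  have hcomm' : Commute h' g' := by
    unfold Commute SemiconjBy
    apply Subtype.ext
    simp only [MulMemClass.coe_mul]
    exact hcomm.symm
  have hpowg : ∀ i j : ZMod 3, g' ^ (i + j).val = g' ^ i.val * g' ^ j.val := by
    intro i j
    rw [ZMod.val_add, ← pow_eq_pow_mod _ hg'3, pow_add]
  have hpowh : ∀ i j : ZMod 3, h' ^ (i + j).val = h' ^ i.val * h' ^ j.val := by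
    intro i j
    rw [ZMod.val_add, ← pow_eq_pow_mod _ hh'3, pow_add]
  let f : Multiplicative (ZMod 3 × ZMod 3) →* H :=
    MonoidHom.mk' (fun m => g' ^ (m.toAdd.1.val) * h' ^ (m.toAdd.2.val)) (by
      intro a b
      simp only [toAdd_mul, Prod.fst_add, Prod.snd_add]
      rw [hpowg, hpowh]
      exact ((hcomm'.pow_pow (a.toAdd.2.val) (b.toAdd.1.val)).mul_mul_mul_comm _ _).symm)
  have hval : ∀ m : Multiplicative (ZMod 3 × ZMod 3),
      ((f m : H) : G) = g₀ ^ (m.toAdd.1.val) * h₀ ^ (m.toAdd.2.val) := by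
    intro m
    simp only [f, MonoidHom.mk'_apply, MulMemClass.coe_mul, SubmonoidClass.coe_pow]
    rfl
  have hinj : Function.Injective f := by
    rw [injective_iff_map_eq_one]
    intro m hm
    have hG : g₀ ^ (m.toAdd.1.val) * h₀ ^ (m.toAdd.2.val) = 1 := by
      rw [← hval m, hm, OneMemClass.coe_one]
    have hi3 : m.toAdd.1.val < 3 := ZMod.val_lt _
    have hj3 : m.toAdd.2.val < 3 := ZMod.val_lt _
    have hg1 : g₀ ≠ 1 := hgne1 _ hg₀
    have hgg1 : g₀ * g₀ ≠ 1 := hg2 g₀ x₀ hx₀ hx₀0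
    have hh1 : h₀ ≠ 1 := hgne1 _ hh₀A
    have hhh1 : h₀ * h₀ ≠ 1 := hg2 h₀ y₀ hy₀ hy₀0
    have hiv : m.toAdd.1.val = 0 ∨ m.toAdd.1.val = 1 ∨ m.toAdd.1.val = 2 := by omega
    have hjv : m.toAdd.2.val = 0 ∨ m.toAdd.2.val = 1 ∨ m.toAdd.2.val = 2 := by omega
    have hij : m.toAdd.1.val = 0 ∧ m.toAdd.2.val = 0 := by
      rcases hiv with hi | hi | hi <;> rcases hjv with hj | hj | hj <;>
          rw [hi, hj] at hG <;>
          simp only [pow_zero, pow_one, pow_two, one_mul, mul_one] at hG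
      · exact ⟨hi, hj⟩
      · exact absurd hG hh1
      · exact absurd hG hhh1
      · exact absurd hG hg1
      · exact absurd hG e1
      · exact absurd hG e2
      · exact absurd hG hgg1
      · exact absurd hG e3
      · exact absurd hG e4
    have hm0 : m.toAdd = 0 :=
      Prod.ext ((ZMod.val_eq_zero _).mp hij.1) ((ZMod.val_eq_zero _).mp hij.2)
    exact toAdd_eq_zero.mp hm0
  have hcard9 : Nat.card (Multiplicative (ZMod 3 × ZMod 3)) = 9 := by
    simp [Nat.card_eq_fintype_card]
  have hbij : Function.Bijective f :=
    (Nat.bijective_iff_injective_and_card f).mpr ⟨hinj, by rw [hcard9, hcardH]⟩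
  have hcloseq : Subgroup.closure ({g₀, h₀} : Set G) = H := by
    apply le_antisymm
    · rw [Subgroup.closure_le]
      rintro a (rfl | ha)
      · exact hg₀H
      · rw [Set.mem_singleton_iff] at ha
        rw [ha]; exact hh₀H
    · intro a haH
      obtain ⟨m, hm⟩ := hbij.2 ⟨a, haH⟩
      have ha' : a = g₀ ^ (m.toAdd.1.val) * h₀ ^ (m.toAdd.2.val) := by
        have hcv := congrArg (Subtype.val) hm
        rw [hval m] at hcv
        exact hcv.symm
      rw [ha']
      exact mul_mem
        (pow_mem (Subgroup.subset_closure (by simp)) _)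
        (pow_mem (Subgroup.subset_closure (by simp)) _)
  refine ⟨H, rfl, ⟨(MulEquiv.ofBijective f hbij).symm⟩, g₀, h₀, hg₀, hh₀A, hcloseq,
    x₀, y₀, hspan g₀ x₀ hx₀ hx₀0, hspan h₀ y₀ hy₀ hy₀0,
    hF1 g₀ x₀ hx₀, hNx, hF1 h₀ y₀ hy₀, hNy, ?_, hxy0⟩
  intro a ha b hb
  have hYy : mul y₀ y₀ ∈ A (h₀ * h₀) := hgrmul _ _ _ hy₀ _ hy₀
  simp only [Set.mem_insert_iff, Set.mem_singleton_iff] at ha hb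
  rcases ha with rfl | rfl <;> rcases hb with rfl | rfl
  · exact hF2 g₀ h₀ e1 _ _ hx₀ hy₀
  · exact hF2 g₀ (h₀ * h₀) e2 _ _ hx₀ hYy
  · exact hF2 (g₀ * g₀) h₀ e3 _ _ hY hy₀
  · exact hF2 (g₀ * g₀) (h₀ * h₀) e4 _ _ hY hYy
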